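/- Let f : ℝ → ℝ be continuous, let e, a, b, a', b', c, c' be real constants with e ≠ 0 and ab' − a'b ≠ 0. Let Ω ⊆ ℝ² be open and v : ℝ² → ℝ be C² on Ω satisfying v_t = f(v_x)v_xx and a + b·v_x(t,x) ≠ 0 on Ω. Fix (t₀,x₀) ∈ Ω and set T₀ = e·t₀ + e₀, Y₀ = a·x₀ + b·v(t₀,x₀) + c. Suppose w : ℝ² → ℝ is C² on a neighborhood of (T₀,Y₀) and satisfies w(e·t + e₀, a·x + b·v(t,x) + c) = a'·x + b'·v(t,x) + c' for all (t,x) in a neighborhood of (t₀,x₀) in Ω. Then at (T₀,Y₀): w_Y = (a' + b'·v_x(t₀,x₀))/(a + b·v_x(t₀,x₀)) and w_T = e⁻¹(a + b·v_x(t₀,x₀))² f(v_x(t₀,x₀)) · w_YY. (This expresses that the stated transformations form the equivalence group G∼ of the class of nonlinear filtration equations, with transformed nonlinearity f̃ = e⁻¹(a + b·v_x)² f.) -/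

import Mathlib

/-- Partial derivative with respect to the first variable (time). -/
noncomputable def pt (u : ℝ × ℝ → ℝ) (p : ℝ × ℝ) : ℝ :=
  deriv (fun s => u (s, p.2)) p.1

/-- Partial derivative with respect to the second variable (space). -/
noncomputable def px (u : ℝ × ℝ → ℝ) (p : ℝ × ℝ) : ℝ :=
  deriv (fun y => u (p.1, y)) p.2

/-- The transformations `t̃ = e t + e₀, x̃ = a x + b v + c, ṽ = a' x + b' v + c'` with
`e ≠ 0`, `a b' − a' b ≠ 0` form the equivalence group of the class of nonlinear filtration
equations `v_t = f(v_x) v_xx`, with transformed nonlinearity `f̃ = e⁻¹ (a + b v_x)² f`. -/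
theorem equivalence_group_nonlinear_filtration
    (f : ℝ → ℝ) (hf : Continuous f)
    (e e₀ a b a' b' c c' : ℝ) (he : e ≠ 0) (hab : a * b' - a' * b ≠ 0)
    (Ω : Set (ℝ × ℝ)) (hΩ : IsOpen Ω)
    (v : ℝ × ℝ → ℝ) (hv : ContDiffOn ℝ 2 v Ω)
    (hpde : ∀ p ∈ Ω, pt v p = f (px v p) * px (px v) p)
    (hden : ∀ p ∈ Ω, a + b * px v p ≠ 0)
    (t₀ x₀ : ℝ) (hmem : (t₀, x₀) ∈ Ω)
    (T₀ Y₀ : ℝ) (hT₀ : T₀ = e * t₀ + e₀) (hY₀ : Y₀ = a * x₀ + b * v (t₀, x₀) + c)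
    (w : ℝ × ℝ → ℝ) (hw : ContDiffAt ℝ 2 w (T₀, Y₀))
    (htr : ∀ᶠ p in nhds (t₀, x₀), p ∈ Ω ∧
      w (e * p.1 + e₀, a * p.2 + b * v p + c) = a' * p.2 + b' * v p + c') :
    px w (T₀, Y₀) = (a' + b' * px v (t₀, x₀)) / (a + b * px v (t₀, x₀)) ∧
      pt w (T₀, Y₀) =
        e⁻¹ * (a + b * px v (t₀, x₀)) ^ 2 * f (px v (t₀, x₀)) * px (px w) (T₀, Y₀) := by
  classical
  -- open sets
  obtain ⟨U, hUsub, hUopen, hU0⟩ := mem_nhds_iff.mp htr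
  obtain ⟨W', hW'nhds, hWcd'⟩ := hw.contDiffOn le_rfl (by simp)
  obtain ⟨W, hWsub, hWopen, hW0⟩ := mem_nhds_iff.mp hW'nhds
  have hwW : ContDiffOn ℝ 2 w W := hWcd'.mono hWsub
  set V : ℝ → ℝ := fun x => v (t₀, x) with hVdef
  set g : ℝ → ℝ := fun y => w (T₀, y) with hgdef
  set h : ℝ → ℝ := fun x => a * x + b * V x + c with hhdef
  have hhx₀ : h x₀ = Y₀ := by simp [hhdef, hY₀, hVdef]
  -- contDiffAt of slices
  have hVcd : ∀ x, (t₀, x) ∈ Ω → ContDiffAt ℝ 2 V x := by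
    intro x hx
    exact (hv.contDiffAt (hΩ.mem_nhds hx)).comp x (contDiffAt_const.prodMk contDiffAt_id)
  have hgcd : ∀ y, (T₀, y) ∈ W → ContDiffAt ℝ 2 g y := by
    intro y hy
    exact (hwW.contDiffAt (hWopen.mem_nhds hy)).comp y (contDiffAt_const.prodMk contDiffAt_id)
  -- the good neighborhood S of x₀
  have hev : ∀ᶠ x in nhds x₀, (t₀, x) ∈ U ∧ (T₀, h x) ∈ W := by
    have h1 : ContinuousAt (fun x : ℝ => ((t₀, x) : ℝ × ℝ)) x₀ :=
      (continuous_const.prodMk continuous_id).continuousAt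
    have hhd0 : HasDerivAt h (a * 1 + b * deriv V x₀) x₀ := by
      rw [hhdef]
      exact (((hasDerivAt_id' x₀).const_mul a).add
        ((((hVcd x₀ hmem).differentiableAt (by norm_num)).hasDerivAt).const_mul b)).add_const c
    have h2 : ContinuousAt (fun x : ℝ => ((T₀, h x) : ℝ × ℝ)) x₀ :=
      continuousAt_const.prodMk hhd0.continuousAt
    have e1 := h1.preimage_mem_nhds (hUopen.mem_nhds hU0)
    have e2 := h2.preimage_mem_nhds (by rw [hhx₀]; exact hWopen.mem_nhds hW0)
    filter_upwards [e1, e2] with x hx1 hx2 using ⟨hx1, hx2⟩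
  obtain ⟨S, hSsub, hSopen, hSx₀⟩ := mem_nhds_iff.mp hev
  have hSΩ : ∀ x ∈ S, (t₀, x) ∈ Ω := fun x hx => (hUsub (hSsub hx).1).1
  have hSrel : ∀ x ∈ S, g (h x) = a' * x + b' * V x + c' := by
    intro x hx
    have := (hUsub (hSsub hx).1).2
    simpa [hgdef, hhdef, hVdef, hT₀] using this
  -- derivative facts
  have hdV : ∀ x ∈ S, HasDerivAt V (deriv V x) x := fun x hx =>
    ((hVcd x (hSΩ x hx)).differentiableAt (by norm_num)).hasDerivAt
  have hdg : ∀ x ∈ S, HasDerivAt g (deriv g (h x)) (h x) := fun x hx =>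
    ((hgcd (h x) (hSsub hx).2).differentiableAt (by norm_num)).hasDerivAt
  have hdh : ∀ x ∈ S, HasDerivAt h (a + b * deriv V x) x := by
    intro x hx
    have h0 : HasDerivAt (fun x => a * x + b * V x + c) (a * 1 + b * deriv V x) x :=
      (((hasDerivAt_id' x).const_mul a).add ((hdV x hx).const_mul b)).add_const c
    rw [hhdef]
    simpa using h0
  -- first derivative identity on S
  have hstar : ∀ x ∈ S, deriv g (h x) * (a + b * deriv V x) = a' + b' * deriv V x := by
    intro x hx
    have hcomp : HasDerivAt (fun x => g (h x)) (deriv g (h x) * (a + b * deriv V x)) x :=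
      (hdg x hx).comp x (hdh x hx)
    have hrhs : HasDerivAt (fun x => a' * x + b' * V x + c') (a' + b' * deriv V x) x := by
      have h0 : HasDerivAt (fun x => a' * x + b' * V x + c') (a' * 1 + b' * deriv V x) x :=
        (((hasDerivAt_id' x).const_mul a').add ((hdV x hx).const_mul b')).add_const c'
      simpa using h0
    have heq : (fun x => a' * x + b' * V x + c') =ᶠ[nhds x] (fun x => g (h x)) := by
      filter_upwards [hSopen.mem_nhds hx] with y hy using (hSrel y hy).symm
    exact (hcomp.congr_of_eventuallyEq heq).unique hrhs
  -- abbreviations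
  set vx := deriv V x₀ with hvx
  set vxx := deriv (deriv V) x₀ with hvxxdef
  set vt := pt v (t₀, x₀) with hvtdef
  have hpxv : px v (t₀, x₀) = vx := rfl
  have hpxxv : px (px v) (t₀, x₀) = vxx := rfl
  have hpxw : px w (T₀, Y₀) = deriv g Y₀ := rfl
  have hpxxw : px (px w) (T₀, Y₀) = deriv (deriv g) Y₀ := rfl
  have hd0 : a + b * vx ≠ 0 := by
    have := hden (t₀, x₀) hmem; rwa [hpxv] at this
  -- first conclusion
  have hE1 : deriv g Y₀ * (a + b * vx) = a' + b' * vx := by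
    have := hstar x₀ hSx₀; rwa [hhx₀] at this
  have conc1 : px w (T₀, Y₀) = (a' + b' * px v (t₀, x₀)) / (a + b * px v (t₀, x₀)) := by
    rw [hpxw, hpxv, eq_div_iff hd0]; exact hE1
  -- second derivative in x
  have hWg : IsOpen {y : ℝ | (T₀, y) ∈ W} :=
    hWopen.preimage (continuous_const.prodMk continuous_id)
  have hgOn : ContDiffOn ℝ 2 g {y : ℝ | (T₀, y) ∈ W} := fun y hy => (hgcd y hy).contDiffWithinAt
  have hddg : HasDerivAt (deriv g) (deriv (deriv g) Y₀) Y₀ := by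
    have h1 : ContDiffOn ℝ 1 (deriv g) {y : ℝ | (T₀, y) ∈ W} :=
      hgOn.deriv_of_isOpen hWg (by norm_num)
    exact ((h1.contDiffAt (hWg.mem_nhds hW0)).differentiableAt (by norm_num)).hasDerivAt
  have hΩV : IsOpen {x : ℝ | (t₀, x) ∈ Ω} :=
    hΩ.preimage (continuous_const.prodMk continuous_id)
  have hVOn : ContDiffOn ℝ 2 V {x : ℝ | (t₀, x) ∈ Ω} := fun x hx => (hVcd x hx).contDiffWithinAt
  have hddV : HasDerivAt (deriv V) vxx x₀ := by
    have h1 : ContDiffOn ℝ 1 (deriv V) {x : ℝ | (t₀, x) ∈ Ω} :=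
      hVOn.deriv_of_isOpen hΩV (by norm_num)
    exact ((h1.contDiffAt (hΩV.mem_nhds hmem)).differentiableAt (by norm_num)).hasDerivAt
  have hE2 : deriv (deriv g) Y₀ * (a + b * vx) * (a + b * vx) + deriv g Y₀ * (b * vxx)
      = b' * vxx := by
    have hl1 : HasDerivAt (fun x => deriv g (h x)) (deriv (deriv g) Y₀ * (a + b * vx)) x₀ := by
      have hddg' : HasDerivAt (deriv g) (deriv (deriv g) Y₀) (h x₀) := by
        rw [hhx₀]; exact hddg
      exact hddg'.comp x₀ (hdh x₀ hSx₀)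
    have hl2 : HasDerivAt (fun x => a + b * deriv V x) (b * vxx) x₀ :=
      (hddV.const_mul b).const_add a
    have hlhs : HasDerivAt (fun x => deriv g (h x) * (a + b * deriv V x))
        (deriv (deriv g) Y₀ * (a + b * vx) * (a + b * vx) + deriv g Y₀ * (b * vxx)) x₀ := by
      have := hl1.mul hl2
      rw [hhx₀] at this
      exact this
    have hrhs : HasDerivAt (fun x => a' + b' * deriv V x) (b' * vxx) x₀ :=
      (hddV.const_mul b').const_add a'
    have heq : (fun x => a' + b' * deriv V x) =ᶠ[nhds x₀]
        (fun x => deriv g (h x) * (a + b * deriv V x)) := by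
      filter_upwards [hSopen.mem_nhds hSx₀] with y hy using (hstar y hy).symm
    exact (hlhs.congr_of_eventuallyEq heq).unique hrhs
  -- time derivative
  have hwd : DifferentiableAt ℝ w (T₀, Y₀) := hw.differentiableAt (by norm_num)
  set L := fderiv ℝ w (T₀, Y₀) with hL
  have hLf : HasFDerivAt w L (T₀, Y₀) := hwd.hasFDerivAt
  have hptw : pt w (T₀, Y₀) = L (1, 0) := by
    have hcur : HasDerivAt (fun s : ℝ => ((s, Y₀) : ℝ × ℝ)) (1, 0) T₀ :=
      (hasDerivAt_id' T₀).prodMk (hasDerivAt_const T₀ Y₀)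
    exact (hLf.comp_hasDerivAt_of_eq _ hcur rfl).deriv
  have hpxwL : deriv g Y₀ = L (0, 1) := by
    have hcur : HasDerivAt (fun y : ℝ => ((T₀, y) : ℝ × ℝ)) (0, 1) Y₀ :=
      (hasDerivAt_const Y₀ T₀).prodMk (hasDerivAt_id' Y₀)
    exact (hLf.comp_hasDerivAt_of_eq _ hcur rfl).deriv
  -- v_t
  have hvt : HasDerivAt (fun s => v (s, x₀)) vt t₀ := by
    have hcur : HasDerivAt (fun s : ℝ => ((s, x₀) : ℝ × ℝ)) (1, 0) t₀ :=
      (hasDerivAt_id' t₀).prodMk (hasDerivAt_const t₀ x₀)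
    have hvd : DifferentiableAt ℝ v (t₀, x₀) :=
      (hv.contDiffAt (hΩ.mem_nhds hmem)).differentiableAt (by norm_num)
    have h0 := hvd.hasFDerivAt.comp_hasDerivAt_of_eq _ hcur rfl
    have hval : vt = (fderiv ℝ v (t₀, x₀)) (1, 0) := h0.deriv
    rw [hval]; exact h0
  -- curve in t
  have hγ : HasDerivAt (fun t : ℝ => ((e * t + e₀, a * x₀ + b * v (t, x₀) + c) : ℝ × ℝ))
      (e, b * vt) t₀ := by
    have h1 : HasDerivAt (fun t : ℝ => e * t + e₀) e t₀ := by
      simpa using ((hasDerivAt_id' t₀).const_mul e).add_const e₀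
    have h2 : HasDerivAt (fun t : ℝ => a * x₀ + b * v (t, x₀) + c) (b * vt) t₀ := by
      simpa using (((hvt.const_mul b).const_add (a * x₀)).add_const c)
    exact h1.prodMk h2
  have hγ0 : (T₀, Y₀) = ((e * t₀ + e₀, a * x₀ + b * v (t₀, x₀) + c) : ℝ × ℝ) := by
    rw [hT₀, hY₀]
  have hE3 : e * pt w (T₀, Y₀) + (b * vt) * deriv g Y₀ = b' * vt := by
    have hcomp : HasDerivAt (fun t => w (e * t + e₀, a * x₀ + b * v (t, x₀) + c))
        (L (e, b * vt)) t₀ := hLf.comp_hasDerivAt_of_eq _ hγ hγ0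
    have hrhs : HasDerivAt (fun t => a' * x₀ + b' * v (t, x₀) + c') (b' * vt) t₀ := by
      simpa using (((hvt.const_mul b').const_add (a' * x₀)).add_const c')
    have heq : (fun t => a' * x₀ + b' * v (t, x₀) + c') =ᶠ[nhds t₀]
        (fun t => w (e * t + e₀, a * x₀ + b * v (t, x₀) + c)) := by
      have h1 : ContinuousAt (fun t : ℝ => ((t, x₀) : ℝ × ℝ)) t₀ :=
        (continuous_id.prodMk continuous_const).continuousAt
      filter_upwards [h1.preimage_mem_nhds (hUopen.mem_nhds hU0)] with t ht
      exact ((hUsub ht).2).symm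
    have hLval : L (e, b * vt) = e * L (1, 0) + (b * vt) * L (0, 1) := by
      have hsum : ((e, b * vt) : ℝ × ℝ) = e • ((1, 0) : ℝ × ℝ) + (b * vt) • ((0, 1) : ℝ × ℝ) := by
        simp [Prod.ext_iff]
      rw [hsum, map_add, map_smul, map_smul, smul_eq_mul, smul_eq_mul]
    have huniq := (hcomp.congr_of_eventuallyEq heq).unique hrhs
    rw [hLval, ← hptw, ← hpxwL] at huniq
    exact huniq
  -- pde at the point
  have hpdeq : vt = f vx * vxx := by
    have h0 := hpde (t₀, x₀) hmem
    rwa [hpxv, hpxxv, ← hvtdef] at h0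
  refine ⟨conc1, ?_⟩
  rw [hptw, hpxxw, hpxv]
  rw [← hptw]
  have key : e * pt w (T₀, Y₀) = (a + b * vx) ^ 2 * f vx * deriv (deriv g) Y₀ := by
    linear_combination hE3 + (b' - b * deriv g Y₀) * hpdeq - f vx * hE2
  field_simp
  linear_combination key
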